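/- Let A be a graded algebra over a field k with char k ≠ 2,3, δ the Hochschild differential, and d₂, d₃, ..., d_{k−1} odd-degree superderivations on the tensor coalgebra (dual picture of Hochschild cochains m₂,...,m_{k−1}) satisfying [d₂, d_j] = φ_j* for all j < k, where φ_k* = −Σ_{i+j=k+2, 3≤i≤j} c_{ij}[d_i, d_j] with c_{ij} = 1 for i < j and c_{ii} = 1/2. Then [d₂, φ_k*] = 0; equivalently, the quadratic expression φ_k(m₃,...,m_{k−1}) appearing on the right-hand side of the A∞-extension equation δm_k = φ_k(m₃,...,m_{k−1}) is a Hochschild cocycle. -/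

import Mathlib

def IsSuperDerivation {k : Type*} [Field k] {V : Type*} [AddCommGroup V] [Module k V]
    (𝒜 : ℤ → Submodule k (TensorAlgebra k V)) (n : ℤ)
    (f : Module.End k (TensorAlgebra k V)) : Prop :=
  (∀ m : ℤ, ∀ x ∈ 𝒜 m, f x ∈ 𝒜 (m + n)) ∧
  (∀ (m : ℤ) (x y : TensorAlgebra k V), x ∈ 𝒜 m →
    f (x * y) = f x * y + (Int.negOnePow (m * n) : ℤ) • (x * f y))

noncomputable def phiStar {k : Type*} [Field k] {V : Type*} [AddCommGroup V] [Module k V]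
    (d : ℕ → Module.End k (TensorAlgebra k V)) (m : ℕ) :
    Module.End k (TensorAlgebra k V) :=
  - ∑ i ∈ Finset.Icc 3 (m + 2),
      if i < m + 2 - i then d i * d (m + 2 - i) + d (m + 2 - i) * d i
      else if i = m + 2 - i then (2 : k)⁻¹ • (d i * d i + d i * d i)
      else 0

private lemma jac1 {R : Type*} [Ring R] (A B C : R) :
    A*(B*C+C*B) - (B*C+C*B)*A
      = ((A*B+B*A)*C - C*(A*B+B*A)) + ((A*C+C*A)*B - B*(A*C+C*A)) := by noncomm_ring

private lemma jac3 {R : Type*} [Ring R] (A B C : R) :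
    ((A*B+B*A)*C - C*(A*B+B*A)) + ((B*C+C*B)*A - A*(B*C+C*B))
      + ((C*A+A*C)*B - B*(C*A+A*C)) = 0 := by noncomm_ring

private lemma aux_neg_smul {k : Type*} [Field k] {R : Type*} [Ring R] [Module k R]
    [SMulCommClass k R R] [IsScalarTower k R R] (c : k) (T W : R) :
    (-(c • T)) * W - W * (-(c • T)) = -(c • (T * W - W * T)) := by
  rw [neg_mul, mul_neg, smul_mul_assoc, mul_smul_comm, smul_sub]; abel

private lemma phi_eq {k : Type*} [Field k] {V : Type*} [AddCommGroup V] [Module k V]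
    (h2 : (2:k) ≠ 0) (d : ℕ → Module.End k (TensorAlgebra k V)) (m : ℕ) :
    phiStar d m = -((2:k)⁻¹ • ∑ i ∈ Finset.Icc 3 (m-1),
      (d i * d (m+2-i) + d (m+2-i) * d i)) := by
  have h12 : (2:k)⁻¹ + (2:k)⁻¹ = 1 := by
    rw [← two_mul, mul_inv_cancel₀ h2]
  unfold phiStar
  congr 1
  set F : ℕ → Module.End k (TensorAlgebra k V) := fun i =>
    if i < m + 2 - i then d i * d (m + 2 - i) + d (m + 2 - i) * d i
    else if i = m + 2 - i then (2 : k)⁻¹ • (d i * d i + d i * d i)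
    else 0 with hF
  have hsub : Finset.Icc 3 (m-1) ⊆ Finset.Icc 3 (m+2) :=
    Finset.Icc_subset_Icc_right (by omega)
  rw [← Finset.sum_subset hsub (by
    intro x hx hnx
    simp only [Finset.mem_Icc] at hx hnx
    have h1 : ¬ x < m + 2 - x := by omega
    have h1' : ¬ x = m + 2 - x := by omega
    simp only [hF, if_neg h1, if_neg h1'])]
  have key : ∑ i ∈ Finset.Icc 3 (m-1),
      ((2:k)⁻¹ • (d i * d (m+2-i) + d (m+2-i) * d i) - F i) = 0 := by
    refine Finset.sum_involution (fun a _ => m + 2 - a) ?_ ?_ ?_ ?_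
    · intro a ha
      simp only [Finset.mem_Icc] at ha
      obtain ⟨ha3, ham⟩ := ha
      have hja : m + 2 - (m + 2 - a) = a := by omega
      simp only [hF, hja]
      rcases lt_trichotomy a (m+2-a) with hlt | heq | hgt
      · rw [if_pos hlt, if_neg (by omega : ¬ m+2-a < a), if_neg (by omega : ¬ m+2-a = a)]
        rw [(add_comm _ _ : d (m+2-a) * d a + d a * d (m+2-a)
            = d a * d (m+2-a) + d (m+2-a) * d a), sub_zero]
        set X := d a * d (m+2-a) + d (m+2-a) * d a with hX
        calc (2:k)⁻¹ • X - X + (2:k)⁻¹ • X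
            = ((2:k)⁻¹ • X + (2:k)⁻¹ • X) - X := by abel
          _ = 0 := by rw [← add_smul, h12, one_smul, sub_self]
      · rw [if_neg (by omega : ¬ a < m+2-a), if_pos heq, ← heq]
        rw [if_neg (lt_irrefl a), if_pos rfl]
        abel
      · rw [if_neg (by omega : ¬ a < m+2-a), if_neg (by omega : ¬ a = m+2-a),
            if_pos (by omega : m+2-a < a)]
        rw [(add_comm _ _ : d (m+2-a) * d a + d a * d (m+2-a)
            = d a * d (m+2-a) + d (m+2-a) * d a), sub_zero]
        set X := d a * d (m+2-a) + d (m+2-a) * d a with hX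
        calc (2:k)⁻¹ • X + ((2:k)⁻¹ • X - X)
            = ((2:k)⁻¹ • X + (2:k)⁻¹ • X) - X := by abel
          _ = 0 := by rw [← add_smul, h12, one_smul, sub_self]
    · intro a ha hfa
      show ¬ m + 2 - a = a
      intro heq
      apply hfa
      simp only [hF, heq]
      simp
    · intro a ha
      simp only [Finset.mem_Icc] at ha ⊢
      omega
    · intro a ha
      simp only [Finset.mem_Icc] at ha
      show m + 2 - (m + 2 - a) = a
      omega
  rw [Finset.sum_sub_distrib, sub_eq_zero, ← Finset.smul_sum] at key
  exact key.symm

set_option maxHeartbeats 4000000 in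
/-- If `d₂, d₃, …, d_{K−1}` are odd-degree superderivations on the tensor
(co)algebra (the duals of Hochschild cochains `m₂, …, m_{K−1}`) satisfying
`[d₂, d_j] = φ_j*` for all `j < K`, then `[d₂, φ_K*] = 0`; i.e. the quadratic
expression `φ_K(m₃, …, m_{K−1})` in the `A∞`-extension equation
`δ m_K = φ_K(m₃, …, m_{K−1})` is a Hochschild cocycle (char k ≠ 2, 3). -/
theorem stmt_19 (k : Type*) [Field k] (h2 : ringChar k ≠ 2) (h3 : ringChar k ≠ 3)
    (V : Type*) [AddCommGroup V] [Module k V]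
    (𝒜 : ℤ → Submodule k (TensorAlgebra k V))
    (K : ℕ) (hK : 3 ≤ K)
    (d : ℕ → Module.End k (TensorAlgebra k V))
    (deg : ℕ → ℤ) (hodd : ∀ i, 2 ≤ i → i ≤ K - 1 → Odd (deg i))
    (hder : ∀ i, 2 ≤ i → i ≤ K - 1 → IsSuperDerivation 𝒜 (deg i) (d i))
    (hbr : ∀ j, 3 ≤ j → j ≤ K - 1 → d 2 * d j + d j * d 2 = phiStar d j) :
    d 2 * phiStar d K - phiStar d K * d 2 = 0 := by
  classical
  have h2' : (2:k) ≠ 0 := Ring.two_ne_zero h2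
  have h3' : (3:k) ≠ 0 := by
    rw [Ne, (by norm_cast : (3:k) = ((3:ℕ):k)), ringChar.spec, Nat.dvd_prime Nat.prime_three]
    exact mt (or_iff_left h3).mp CharP.ringChar_ne_one
  set S := Finset.Icc 3 (K-1) with hS
  set D := (S ×ˢ S).filter (fun x : ℕ × ℕ => x.1 + x.2 ≤ K+1) with hD
  have memD : ∀ x : ℕ × ℕ, x ∈ D ↔
      (3 ≤ x.1 ∧ x.1 ≤ K-1 ∧ 3 ≤ x.2 ∧ x.2 ≤ K-1 ∧ x.1 + x.2 ≤ K+1) := by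
    intro x
    simp only [hD, hS, Finset.mem_filter, Finset.mem_product, Finset.mem_Icc]
    tauto
  -- the fully symmetrized triple sum
  set g : ℕ × ℕ → Module.End k (TensorAlgebra k V) := fun x =>
    (d x.1 * d (K+4-x.1-x.2) + d (K+4-x.1-x.2) * d x.1) * d x.2
      - d x.2 * (d x.1 * d (K+4-x.1-x.2) + d (K+4-x.1-x.2) * d x.1) with hg
  have rot1 : ∑ x ∈ D, ((d (K+4-x.1-x.2) * d x.2 + d x.2 * d (K+4-x.1-x.2)) * d x.1
      - d x.1 * (d (K+4-x.1-x.2) * d x.2 + d x.2 * d (K+4-x.1-x.2))) = ∑ x ∈ D, g x := by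
    refine Finset.sum_nbij' (fun x : ℕ × ℕ => (K+4-x.1-x.2, x.1))
      (fun x : ℕ × ℕ => (x.2, K+4-x.1-x.2)) ?_ ?_ ?_ ?_ ?_
    · rintro ⟨p, q⟩ ha; rw [memD] at ha ⊢; dsimp only at ha ⊢; omega
    · rintro ⟨p, q⟩ ha; rw [memD] at ha ⊢; dsimp only at ha ⊢; omega
    · rintro ⟨p, q⟩ ha; rw [memD] at ha; dsimp only at ha ⊢
      have e : K+4-(K+4-p-q)-p = q := by omega
      rw [e]
    · rintro ⟨p, q⟩ ha; rw [memD] at ha; dsimp only at ha ⊢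
      have e : K+4-q-(K+4-p-q) = p := by omega
      rw [e]
    · rintro ⟨p, q⟩ ha; rw [memD] at ha
      simp only [hg]
      try dsimp only at ha ⊢
      have e : K+4-(K+4-p-q)-p = q := by omega
      rw [e]
  have rot2 : ∑ x ∈ D, ((d x.2 * d x.1 + d x.1 * d x.2) * d (K+4-x.1-x.2)
      - d (K+4-x.1-x.2) * (d x.2 * d x.1 + d x.1 * d x.2)) = ∑ x ∈ D, g x := by
    refine Finset.sum_nbij' (fun x : ℕ × ℕ => (x.2, K+4-x.1-x.2))
      (fun x : ℕ × ℕ => (K+4-x.1-x.2, x.1)) ?_ ?_ ?_ ?_ ?_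
    · rintro ⟨p, q⟩ ha; rw [memD] at ha ⊢; dsimp only at ha ⊢; omega
    · rintro ⟨p, q⟩ ha; rw [memD] at ha ⊢; dsimp only at ha ⊢; omega
    · rintro ⟨p, q⟩ ha; rw [memD] at ha; dsimp only at ha ⊢
      have e : K+4-q-(K+4-p-q) = p := by omega
      rw [e]
    · rintro ⟨p, q⟩ ha; rw [memD] at ha; dsimp only at ha ⊢
      have e : K+4-(K+4-p-q)-p = q := by omega
      rw [e]
    · rintro ⟨p, q⟩ ha; rw [memD] at ha
      simp only [hg]
      try dsimp only at ha ⊢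
      have e : K+4-q-(K+4-p-q) = p := by omega
      rw [e]
  have hT : ∑ x ∈ D, g x = 0 := by
    have hsum0 : (∑ x ∈ D, g x)
        + (∑ x ∈ D, ((d (K+4-x.1-x.2) * d x.2 + d x.2 * d (K+4-x.1-x.2)) * d x.1
            - d x.1 * (d (K+4-x.1-x.2) * d x.2 + d x.2 * d (K+4-x.1-x.2))))
        + (∑ x ∈ D, ((d x.2 * d x.1 + d x.1 * d x.2) * d (K+4-x.1-x.2)
            - d (K+4-x.1-x.2) * (d x.2 * d x.1 + d x.1 * d x.2))) = 0 := by
      rw [← Finset.sum_add_distrib, ← Finset.sum_add_distrib]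
      refine Finset.sum_eq_zero fun x _ => ?_
      simpa only [hg] using jac3 (d x.1) (d (K+4-x.1-x.2)) (d x.2)
    rw [rot1, rot2] at hsum0
    have h3smul : (3:k) • (∑ x ∈ D, g x) = 0 := by
      rw [show (3:k) = 1+1+1 by norm_num, add_smul, add_smul, one_smul]
      exact hsum0
    rcases smul_eq_zero.mp h3smul with h | h
    · exact absurd h h3'
    · exact h
  -- sum over S of the brackets of inner sums vanishes
  have hZ : ∑ i ∈ S, ((∑ p ∈ Finset.Icc 3 (i-1), (d p * d (i+2-p) + d (i+2-p) * d p)) * d (K+2-i)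
      - d (K+2-i) * (∑ p ∈ Finset.Icc 3 (i-1), (d p * d (i+2-p) + d (i+2-p) * d p))) = 0 := by
    have step : ∀ i ∈ S,
        (∑ p ∈ Finset.Icc 3 (i-1), (d p * d (i+2-p) + d (i+2-p) * d p)) * d (K+2-i)
          - d (K+2-i) * (∑ p ∈ Finset.Icc 3 (i-1), (d p * d (i+2-p) + d (i+2-p) * d p))
        = ∑ p ∈ Finset.Icc 3 (i-1), ((d p * d (i+2-p) + d (i+2-p) * d p) * d (K+2-i)
            - d (K+2-i) * (d p * d (i+2-p) + d (i+2-p) * d p)) := by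
      intro i _
      rw [Finset.sum_mul, Finset.mul_sum, ← Finset.sum_sub_distrib]
    rw [Finset.sum_congr rfl step, Finset.sum_sigma']
    rw [← hT]
    refine Finset.sum_nbij' (fun x : (_ : ℕ) × ℕ => (x.2, K+2-x.1))
      (fun y : ℕ × ℕ => ⟨K+2-y.2, y.1⟩) ?_ ?_ ?_ ?_ ?_
    · rintro ⟨i, p⟩ ha
      simp only [Finset.mem_sigma, hS, Finset.mem_Icc] at ha
      rw [memD]; dsimp only; omega
    · rintro ⟨p, j⟩ ha
      rw [memD] at ha
      simp only [Finset.mem_sigma, hS, Finset.mem_Icc]; dsimp only at ha ⊢; omega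
    · rintro ⟨i, p⟩ ha
      simp only [Finset.mem_sigma, hS, Finset.mem_Icc] at ha
      dsimp only
      have e : K+2-(K+2-i) = i := by omega
      rw [e]
    · rintro ⟨p, j⟩ ha
      rw [memD] at ha
      dsimp only at ha ⊢
      have e : K+2-(K+2-j) = j := by omega
      rw [e]
    · rintro ⟨i, p⟩ ha
      simp only [Finset.mem_sigma, hS, Finset.mem_Icc] at ha
      simp only [hg]
      try dsimp only
      have e : K+4-p-(K+2-i) = i+2-p := by omega
      rw [e]
  -- the single sum of brackets with phiStar
  have hX : ∑ i ∈ S, (phiStar d i * d (K+2-i) - d (K+2-i) * phiStar d i) = 0 := by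
    have hptw : ∀ i ∈ S, phiStar d i * d (K+2-i) - d (K+2-i) * phiStar d i
        = -((2:k)⁻¹ • ((∑ p ∈ Finset.Icc 3 (i-1), (d p * d (i+2-p) + d (i+2-p) * d p)) * d (K+2-i)
            - d (K+2-i) * (∑ p ∈ Finset.Icc 3 (i-1), (d p * d (i+2-p) + d (i+2-p) * d p)))) := by
      intro i _
      rw [phi_eq h2' d i]
      rw [neg_mul (α := Module.End k (TensorAlgebra k V)), mul_neg (α := Module.End k (TensorAlgebra k V)), smul_mul_assoc, mul_smul_comm, smul_sub]
      abel
    rw [Finset.sum_congr rfl hptw, Finset.sum_neg_distrib, ← Finset.smul_sum, hZ, smul_zero,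
      neg_zero]
  -- the key commutation
  have hsum2 : d 2 * (∑ i ∈ S, (d i * d (K+2-i) + d (K+2-i) * d i))
      - (∑ i ∈ S, (d i * d (K+2-i) + d (K+2-i) * d i)) * d 2 = 0 := by
    rw [Finset.mul_sum, Finset.sum_mul, ← Finset.sum_sub_distrib]
    have hptw2 : ∀ i ∈ S, d 2 * (d i * d (K+2-i) + d (K+2-i) * d i)
        - (d i * d (K+2-i) + d (K+2-i) * d i) * d 2
        = (phiStar d i * d (K+2-i) - d (K+2-i) * phiStar d i)
          + (phiStar d (K+2-i) * d i - d i * phiStar d (K+2-i)) := by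
      intro i hi
      simp only [hS, Finset.mem_Icc] at hi
      rw [jac1 (d 2) (d i) (d (K+2-i)), hbr i (by omega) (by omega),
        hbr (K+2-i) (by omega) (by omega)]
    rw [Finset.sum_congr rfl hptw2, Finset.sum_add_distrib]
    have hswap : ∑ i ∈ S, (phiStar d (K+2-i) * d i - d i * phiStar d (K+2-i))
        = ∑ i ∈ S, (phiStar d i * d (K+2-i) - d (K+2-i) * phiStar d i) := by
      refine Finset.sum_nbij' (fun a => K+2-a) (fun a => K+2-a) ?_ ?_ ?_ ?_ ?_
      · intro a ha; simp only [hS, Finset.mem_Icc] at ha ⊢; omega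
      · intro a ha; simp only [hS, Finset.mem_Icc] at ha ⊢; omega
      · intro a ha; simp only [hS, Finset.mem_Icc] at ha; show K+2-(K+2-a) = a; omega
      · intro a ha; simp only [hS, Finset.mem_Icc] at ha; show K+2-(K+2-a) = a; omega
      · intro a ha; simp only [hS, Finset.mem_Icc] at ha
        have e : K+2-(K+2-a) = a := by omega
        rw [e]
    rw [hswap, hX, add_zero]
  rw [phi_eq h2' d K]
  have hcomm : d 2 * (∑ i ∈ S, (d i * d (K+2-i) + d (K+2-i) * d i))
      = (∑ i ∈ S, (d i * d (K+2-i) + d (K+2-i) * d i)) * d 2 := sub_eq_zero.mp hsum2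
  rw [mul_neg (α := Module.End k (TensorAlgebra k V)), neg_mul (α := Module.End k (TensorAlgebra k V)), mul_smul_comm, smul_mul_assoc, hcomm, sub_self]
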